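/- Under Assumptions Q1, A1-i and A1-ii, for every payoff vector π ∈ ℝ^𝒜, every a ∈ 𝒜, and every exact-rate transition vector z_a for a at π, one has z_a · g_*[π] = h_{a*}[π]. -/

import Mathlib

open MeasureTheory Finset
open scoped Classical

/-- The maximal payoff among actions in `S`. -/
noncomputable def piStar {A : Type*} (π : A → ℝ) (S : Finset A) : ℝ :=
  if h : S.Nonempty then S.sup' h π else 0

/-- The set of optimal actions in `S`: `b_*[π](S)`. -/
noncomputable def bStar {A : Type*} (π : A → ℝ) (S : Finset A) : Finset A :=
  S.filter (fun b => π b = piStar π S)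

/-- `Q(q) = μ_Q((-∞, q])`. -/
noncomputable def Qfun (μQ : Measure ℝ) (q : ℝ) : ℝ := (μQ (Set.Iic q)).toReal

/-- The individual ex-ante first-order net gain `g_{a*}[π]`. -/
noncomputable def gain {A : Type*} [Fintype A] [DecidableEq A]
    (P : A → Finset A → ℝ) (μQ : Measure ℝ) (π : A → ℝ) (a : A) : ℝ :=
  ∑ A' ∈ (Finset.univ.erase a).powerset,
    P a A' * ∫ q, max (piStar π A' - π a - q) 0 ∂μQ

/-- `g_{**}[π](S) = min_{b ∈ S} g_{b*}[π]`. -/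
noncomputable def gainMin {A : Type*} [Fintype A] [DecidableEq A]
    (P : A → Finset A → ℝ) (μQ : Measure ℝ) (π : A → ℝ) (S : Finset A) : ℝ :=
  if h : S.Nonempty then S.inf' h (fun b => gain P μQ π b) else 0

/-- The individual ex-ante second-order net gain `h_{a*}[π]`. -/
noncomputable def gain2 {A : Type*} [Fintype A] [DecidableEq A]
    (P : A → Finset A → ℝ) (μQ : Measure ℝ) (π : A → ℝ) (a : A) : ℝ :=
  ∑ A' ∈ (Finset.univ.erase a).powerset,
    P a A' * Qfun μQ (piStar π A' - π a) * (gainMin P μQ π A' - gain P μQ π a)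

section Aux
variable {A : Type*} [Fintype A] [DecidableEq A]

omit [Fintype A] [DecidableEq A] in
lemma ae_nonneg (μQ : Measure ℝ) [IsProbabilityMeasure μQ]
    (hQ1a : ∀ q : ℝ, q < 0 → Qfun μQ q = 0) : ∀ᵐ q ∂μQ, 0 ≤ q := by
  have h : ∀ q : ℝ, q < 0 → μQ (Set.Iic q) = 0 := by
    intro q hq
    have h1 := hQ1a q hq
    have hfin : μQ (Set.Iic q) ≠ ⊤ := measure_ne_top μQ _
    rw [Qfun, ENNReal.toReal_eq_zero_iff] at h1
    tauto
  have hsub : Set.Iio (0:ℝ) ⊆ ⋃ n : ℕ, Set.Iic (-(1:ℝ)/(n+1)) := by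
    intro q hq
    obtain ⟨n, hn⟩ := exists_nat_one_div_lt (show (0:ℝ) < -q by simpa using hq)
    refine Set.mem_iUnion.2 ⟨n, ?_⟩
    have he : -(1:ℝ)/(n+1) = -(1/(n+1)) := by ring
    simp only [Set.mem_Iic, he]
    linarith
  have h0 : μQ (Set.Iio 0) = 0 := by
    refine le_antisymm (le_trans (measure_mono hsub) ?_) zero_le
    refine le_trans (measure_iUnion_le _) ?_
    have hz : ∀ n : ℕ, μQ (Set.Iic (-(1:ℝ)/(n+1))) = 0 := by
      intro n
      exact h _ (div_neg_of_neg_of_pos (by norm_num) (by positivity))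
    simp [hz]
  rw [ae_iff]
  have hset : {q : ℝ | ¬ 0 ≤ q} = Set.Iio 0 := by ext q; simp [not_le]
  rw [hset]; exact h0

omit [Fintype A] [DecidableEq A] in
lemma phi_integrable (μQ : Measure ℝ) [IsProbabilityMeasure μQ]
    (hQ1a : ∀ q : ℝ, q < 0 → Qfun μQ q = 0) (x : ℝ) :
    Integrable (fun q => max (x - q) 0) μQ := by
  refine Integrable.mono' (integrable_const (max x 0))
    ((Continuous.max (by continuity) continuous_const).aestronglyMeasurable) ?_
  filter_upwards [ae_nonneg μQ hQ1a] with q hq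
  rw [Real.norm_eq_abs, abs_of_nonneg (le_max_right _ _)]
  exact max_le_max (by linarith) le_rfl

omit [Fintype A] [DecidableEq A] in
lemma phi_nonneg (μQ : Measure ℝ) (x : ℝ) : 0 ≤ ∫ q, max (x - q) 0 ∂μQ :=
  integral_nonneg fun q => le_max_right _ _

omit [Fintype A] [DecidableEq A] in
lemma phi_mono (μQ : Measure ℝ) [IsProbabilityMeasure μQ]
    (hQ1a : ∀ q : ℝ, q < 0 → Qfun μQ q = 0) {x x' : ℝ} (h : x ≤ x') :
    ∫ q, max (x - q) 0 ∂μQ ≤ ∫ q, max (x' - q) 0 ∂μQ :=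
  integral_mono (phi_integrable μQ hQ1a x) (phi_integrable μQ hQ1a x')
    fun q => max_le_max (by linarith) le_rfl

omit [Fintype A] [DecidableEq A] in
lemma phi_zero (μQ : Measure ℝ) [IsProbabilityMeasure μQ]
    (hQ1a : ∀ q : ℝ, q < 0 → Qfun μQ q = 0) {x : ℝ} (h : x ≤ 0) :
    ∫ q, max (x - q) 0 ∂μQ = 0 := by
  have hcong : (fun q => max (x - q) 0) =ᵐ[μQ] (fun _ => (0:ℝ)) := by
    filter_upwards [ae_nonneg μQ hQ1a] with q hq
    exact max_eq_right (by linarith)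
  rw [integral_congr_ae hcong, integral_const]
  simp

variable (P : A → Finset A → ℝ) (μQ : Measure ℝ) (π : A → ℝ)

/-- Tail sum: total `P`-weight of available sets meeting `S`. -/
noncomputable def tailM (b : A) (S : Finset A) : ℝ :=
  ∑ A' ∈ (Finset.univ.erase b).powerset.filter (fun A' => (A' ∩ S).Nonempty), P b A'

lemma tailM_mono (hPnn : ∀ a A', 0 ≤ P a A') (b : A) {S T : Finset A} (h : S ⊆ T) :
    tailM P b S ≤ tailM P b T := by
  refine Finset.sum_le_sum_of_subset_of_nonneg ?_ (fun i _ _ => hPnn b i)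
  intro A' hA'
  simp only [Finset.mem_filter] at hA' ⊢
  exact ⟨hA'.1, hA'.2.mono (Finset.inter_subset_inter le_rfl h)⟩

lemma gain_decomp (hPempty : ∀ a, P a (∅ : Finset A) = 0) (b : A) :
    gain P μQ π b = ∑ w ∈ Finset.univ.image π,
      (∫ q, max (w - π b - q) 0 ∂μQ) *
        (tailM P b (Finset.univ.filter (fun d => w ≤ π d))
          - tailM P b (Finset.univ.filter (fun d => w < π d))) := by
  unfold gain tailM
  have hint : ∀ (A' : Finset A) (p : A → Prop) [DecidablePred p],
      (A' ∩ Finset.univ.filter p).Nonempty ↔ ∃ d ∈ A', p d := by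
    intro A' p _
    constructor
    · rintro ⟨d, hd⟩
      simp only [Finset.mem_inter, Finset.mem_filter] at hd
      exact ⟨d, hd.1, hd.2.2⟩
    · rintro ⟨d, hd, hp⟩
      exact ⟨d, by simp [Finset.mem_inter, Finset.mem_filter, hd, hp]⟩
  have key : ∀ A' ∈ (Finset.univ.erase b).powerset,
      P b A' * ∫ q, max (piStar π A' - π b - q) 0 ∂μQ
      = ∑ w ∈ Finset.univ.image π, (∫ q, max (w - π b - q) 0 ∂μQ) *
          ((if (A' ∩ Finset.univ.filter (fun d => w ≤ π d)).Nonempty then P b A' else 0)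
           - (if (A' ∩ Finset.univ.filter (fun d => w < π d)).Nonempty then P b A' else 0)) := by
    intro A' _
    rcases A'.eq_empty_or_nonempty with rfl | h
    · simp [hPempty]
    · have hps : piStar π A' = A'.sup' h π := dif_pos h
      set m := A'.sup' h π with hm
      have hmem : m ∈ Finset.univ.image π := by
        obtain ⟨d, _, hdm⟩ := Finset.exists_mem_eq_sup' h π
        exact Finset.mem_image.2 ⟨d, Finset.mem_univ d, hdm.symm⟩
      have hp1 : ∀ w, (A' ∩ Finset.univ.filter (fun d => w ≤ π d)).Nonempty ↔ w ≤ m := by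
        intro w; rw [hint A' (fun d => w ≤ π d), hm, Finset.le_sup'_iff]
      have hp2 : ∀ w, (A' ∩ Finset.univ.filter (fun d => w < π d)).Nonempty ↔ w < m := by
        intro w; rw [hint A' (fun d => w < π d), hm, Finset.lt_sup'_iff]
      rw [eq_comm]
      refine Finset.sum_eq_single_of_mem m hmem ?_ |>.trans ?_
      · intro w _ hwm
        rcases lt_trichotomy w m with hlt | heq | hgt
        · rw [if_pos ((hp1 w).2 hlt.le), if_pos ((hp2 w).2 hlt)]; ring
        · exact absurd heq hwm
        · rw [if_neg (fun hc => absurd ((hp1 w).1 hc) (not_le.2 hgt)),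
            if_neg (fun hc => absurd ((hp2 w).1 hc) (not_lt.2 hgt.le))]; ring
      · rw [if_pos ((hp1 m).2 le_rfl), if_neg (fun hc => lt_irrefl m ((hp2 m).1 hc)), hps]
        ring
  rw [Finset.sum_congr rfl key, Finset.sum_comm]
  refine Finset.sum_congr rfl fun w _ => ?_
  rw [← Finset.mul_sum]
  congr 1
  rw [Finset.sum_sub_distrib, Finset.sum_filter, Finset.sum_filter]

lemma gain_le [IsProbabilityMeasure μQ]
    (hPnn : ∀ a A', 0 ≤ P a A')
    (hPempty : ∀ a, P a (∅ : Finset A) = 0)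
    (hQ1a : ∀ q : ℝ, q < 0 → Qfun μQ q = 0)
    (hA1ii : ∀ a b : A, ∀ S : Finset A, S ⊆ Finset.univ \ {a, b} →
      ∑ A' ∈ (Finset.univ.erase a).powerset.filter (fun A' => (A' ∩ S).Nonempty), P a A'
        = ∑ A' ∈ (Finset.univ.erase b).powerset.filter (fun A' => (A' ∩ S).Nonempty), P b A')
    (b c : A) (h : π c ≤ π b) : gain P μQ π b ≤ gain P μQ π c := by
  rw [gain_decomp P μQ π hPempty b, gain_decomp P μQ π hPempty c]
  refine Finset.sum_le_sum fun w _ => ?_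
  have hST : Finset.univ.filter (fun d => w < π d) ⊆ Finset.univ.filter (fun d => w ≤ π d) :=
    by intro d hd; simp only [Finset.mem_filter] at hd ⊢; exact ⟨hd.1, hd.2.le⟩
  have hDc : 0 ≤ tailM P c (Finset.univ.filter (fun d => w ≤ π d))
      - tailM P c (Finset.univ.filter (fun d => w < π d)) :=
    sub_nonneg.2 (tailM_mono P hPnn c hST)
  by_cases hwb : w ≤ π b
  · rw [phi_zero μQ hQ1a (by linarith : w - π b ≤ 0), zero_mul]
    exact mul_nonneg (phi_nonneg μQ _) hDc
  · push_neg at hwb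
    have hsub1 : Finset.univ.filter (fun d => w ≤ π d) ⊆ Finset.univ \ {b, c} := by
      intro d hd
      simp only [Finset.mem_filter] at hd
      simp only [Finset.mem_sdiff, Finset.mem_univ, true_and, Finset.mem_insert,
        Finset.mem_singleton]
      push_neg
      constructor
      · rintro rfl; linarith [hd.2]
      · rintro rfl; linarith [hd.2]
    have hEq1 : tailM P b (Finset.univ.filter (fun d => w ≤ π d))
        = tailM P c (Finset.univ.filter (fun d => w ≤ π d)) := hA1ii b c _ hsub1
    have hEq2 : tailM P b (Finset.univ.filter (fun d => w < π d))
        = tailM P c (Finset.univ.filter (fun d => w < π d)) :=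
      hA1ii b c _ (hST.trans hsub1)
    rw [hEq1, hEq2]
    exact mul_le_mul_of_nonneg_right (phi_mono μQ hQ1a (by linarith)) hDc

lemma gain_bStar [IsProbabilityMeasure μQ]
    (hPnn : ∀ a A', 0 ≤ P a A')
    (hPempty : ∀ a, P a (∅ : Finset A) = 0)
    (hQ1a : ∀ q : ℝ, q < 0 → Qfun μQ q = 0)
    (hA1ii : ∀ a b : A, ∀ S : Finset A, S ⊆ Finset.univ \ {a, b} →
      ∑ A' ∈ (Finset.univ.erase a).powerset.filter (fun A' => (A' ∩ S).Nonempty), P a A'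
        = ∑ A' ∈ (Finset.univ.erase b).powerset.filter (fun A' => (A' ∩ S).Nonempty), P b A')
    (A' : Finset A) (h : A'.Nonempty) (b : A) (hb : b ∈ bStar π A') :
    gain P μQ π b = gainMin P μQ π A' := by
  rw [gainMin, dif_pos h]
  have hbA : b ∈ A' := (Finset.mem_filter.1 hb).1
  have hπb : π b = piStar π A' := (Finset.mem_filter.1 hb).2
  refine le_antisymm (Finset.le_inf' h _ fun c hc => ?_) (Finset.inf'_le _ hbA)
  refine gain_le P μQ π hPnn hPempty hQ1a hA1ii b c ?_
  rw [hπb, piStar, dif_pos h]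
  exact Finset.le_sup' π hc

end Aux

/-- For every exact-rate transition vector `z_a` for `a` at `π` (built from a family
`y` of probability vectors supported on the optimal available actions),
`z_a · g_*[π] = h_{a*}[π]`. -/
theorem stmt5 {A : Type*} [Fintype A] [DecidableEq A] [Nonempty A]
    (P : A → Finset A → ℝ) (μQ : Measure ℝ) [IsProbabilityMeasure μQ]
    (hPnn : ∀ a A', 0 ≤ P a A')
    (hPsupp : ∀ a A', ¬ A' ⊆ Finset.univ.erase a → P a A' = 0)
    (hPempty : ∀ a, P a (∅ : Finset A) = 0)
    (hPsum : ∀ a, ∑ A' ∈ (Finset.univ.erase a).powerset, P a A' = 1)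
    -- Assumption Q1
    (hQ1a : ∀ q : ℝ, q < 0 → Qfun μQ q = 0)
    (hQ1b : ∀ q : ℝ, 0 < q → 0 < Qfun μQ q)
    -- Assumption A1-i
    (hA1i : ∀ a b : A, b ≠ a →
      0 < ∑ A' ∈ (Finset.univ.erase a).powerset.filter (fun A' => b ∈ A'), P a A')
    -- Assumption A1-ii
    (hA1ii : ∀ a b : A, ∀ S : Finset A, S ⊆ Finset.univ \ {a, b} →
      ∑ A' ∈ (Finset.univ.erase a).powerset.filter (fun A' => (A' ∩ S).Nonempty), P a A'
        = ∑ A' ∈ (Finset.univ.erase b).powerset.filter (fun A' => (A' ∩ S).Nonempty), P b A')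
    (π : A → ℝ) (a : A)
    (y : Finset A → A → ℝ)
    (hy : ∀ A' ∈ (Finset.univ.erase a).powerset, A'.Nonempty →
      y A' ∈ stdSimplex ℝ A ∧ ∀ b, y A' b ≠ 0 → b ∈ bStar π A') :
    ∑ b : A,
        (∑ A' ∈ (Finset.univ.erase a).powerset,
          P a A' * Qfun μQ (piStar π A' - π a) *
            (y A' b - (if b = a then (1 : ℝ) else 0))) * gain P μQ π b
      = gain2 P μQ π a := by
  have key : ∀ A' ∈ (Finset.univ.erase a).powerset,
      ∑ b : A, (P a A' * Qfun μQ (piStar π A' - π a) *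
          (y A' b - (if b = a then (1:ℝ) else 0))) * gain P μQ π b
      = P a A' * Qfun μQ (piStar π A' - π a) * (gainMin P μQ π A' - gain P μQ π a) := by
    intro A' hA'
    rcases A'.eq_empty_or_nonempty with rfl | hne
    · simp [hPempty]
    · obtain ⟨hsimpl, hsupp⟩ := hy A' hA' hne
      have hsum1 : ∑ b : A, y A' b = 1 := hsimpl.2
      have hyg : ∑ b : A, y A' b * gain P μQ π b = gainMin P μQ π A' := by
        have hterm : ∀ b : A, y A' b * gain P μQ π b = y A' b * gainMin P μQ π A' := by
          intro b
          by_cases hb : y A' b = 0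
          · simp [hb]
          · rw [gain_bStar P μQ π hPnn hPempty hQ1a hA1ii A' hne b (hsupp b hb)]
        rw [Finset.sum_congr rfl (fun b _ => hterm b), ← Finset.sum_mul, hsum1, one_mul]
      have hda : ∑ b : A, (if b = a then (1:ℝ) else 0) * gain P μQ π b
          = gain P μQ π a := by
        simp [ite_mul]
      have expand : ∀ b : A,
          (P a A' * Qfun μQ (piStar π A' - π a) * (y A' b - (if b = a then (1:ℝ) else 0)))
              * gain P μQ π b
          = P a A' * Qfun μQ (piStar π A' - π a) * (y A' b * gain P μQ π b)
            - P a A' * Qfun μQ (piStar π A' - π a)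
              * ((if b = a then (1:ℝ) else 0) * gain P μQ π b) := by
        intro b; ring
      rw [Finset.sum_congr rfl (fun b _ => expand b), Finset.sum_sub_distrib,
        ← Finset.mul_sum, ← Finset.mul_sum, hyg, hda, ← mul_sub]
  calc ∑ b : A,
        (∑ A' ∈ (Finset.univ.erase a).powerset,
          P a A' * Qfun μQ (piStar π A' - π a) *
            (y A' b - (if b = a then (1 : ℝ) else 0))) * gain P μQ π b
      = ∑ b : A, ∑ A' ∈ (Finset.univ.erase a).powerset,
          (P a A' * Qfun μQ (piStar π A' - π a) *
            (y A' b - (if b = a then (1 : ℝ) else 0))) * gain P μQ π b := by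
        exact Finset.sum_congr rfl fun b _ => Finset.sum_mul _ _ _
    _ = ∑ A' ∈ (Finset.univ.erase a).powerset, ∑ b : A,
          (P a A' * Qfun μQ (piStar π A' - π a) *
            (y A' b - (if b = a then (1 : ℝ) else 0))) * gain P μQ π b :=
        Finset.sum_comm
    _ = ∑ A' ∈ (Finset.univ.erase a).powerset,
          P a A' * Qfun μQ (piStar π A' - π a) * (gainMin P μQ π A' - gain P μQ π a) :=
        Finset.sum_congr rfl key
    _ = gain2 P μQ π a := rfl
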